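/- Let p ∈ (1, ∞) and let f : T → ℝ be harmonic on T. Then sup_{k ∈ ℤ} Σ_{x : ℓ(x)=k} |f(x)|^p m_ν(x) < ∞ (i.e. f ∈ H^p) if and only if there exists g ∈ L^p(∂T, ν) such that f = 𝒫g, i.e. f(x) = (1/m_ν(x)) ∫_{∂T_x} g dν for all x ∈ T. -/

import Mathlib

open MeasureTheory
open scoped ENNReal NNReal

/-- The punctured boundary `∂T` of the tree: maps `ω : ℤ → T` with `lev (ω j) = j`
and `par (ω j) = ω (j+1)`. -/
def PBoundary {T : Type*} (par : T → T) (lev : T → ℤ) : Type _ :=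
  {ω : ℤ → T // (∀ j : ℤ, lev (ω j) = j) ∧ ∀ j : ℤ, par (ω j) = ω (j + 1)}

/-- The boundary sector `∂T_x`. -/
def sector {T : Type*} (par : T → T) (lev : T → ℤ) (x : T) : Set (PBoundary par lev) :=
  {ω : PBoundary par lev | ω.1 (lev x) = x}

/-- The σ-algebra on `∂T` generated by the sectors. -/
instance {T : Type*} (par : T → T) (lev : T → ℤ) : MeasurableSpace (PBoundary par lev) :=
  MeasurableSpace.generateFrom (Set.range (sector par lev))

/-- The flow measure `m_ν x = ν (∂T_x)` (as a real number). -/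
noncomputable def mnu {T : Type*} (par : T → T) (lev : T → ℤ)
    (ν : Measure (PBoundary par lev)) (x : T) : ℝ :=
  (ν (sector par lev x)).toReal

/-- The Poisson integral operator `𝒫 g (x) = m_ν(x)⁻¹ ∫_{∂T_x} g dν`. -/
noncomputable def poisson {T : Type*} (par : T → T) (lev : T → ℤ)
    (ν : Measure (PBoundary par lev)) (g : PBoundary par lev → ℝ) (x : T) : ℝ :=
  (mnu par lev ν x)⁻¹ * ∫ ω in sector par lev x, g ω ∂ν

/-- A function on `T` is harmonic if `Δf(x) = f(x) - Σ_{y ∈ s(x)} f(y) m_ν(y)/m_ν(x) = 0`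
for every vertex `x`. -/
def Harmonic {T : Type*} (par : T → T) (lev : T → ℤ)
    (ν : Measure (PBoundary par lev)) (f : T → ℝ) : Prop :=
  ∀ x : T, f x = ∑ᶠ y ∈ {y : T | par y = x}, f y * (mnu par lev ν y / mnu par lev ν x)

section Aux
variable {T : Type*} (par : T → T) (lev : T → ℤ)

lemma pb_iter (ω : PBoundary par lev) (j : ℤ) : ∀ n : ℕ, par^[n] (ω.1 j) = ω.1 (j + n)
  | 0 => by simp
  | (n+1) => by
      rw [Function.iterate_succ_apply', pb_iter ω j n, ω.2.2]
      push_cast; ring_nf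

lemma sector_measurableSet (x : T) : MeasurableSet (sector par lev x) :=
  MeasurableSpace.measurableSet_generateFrom ⟨x, rfl⟩

lemma sector_disjoint {x y : T} (hl : lev x = lev y) (hne : x ≠ y) :
    Disjoint (sector par lev x) (sector par lev y) := by
  rw [Set.disjoint_left]
  intro ω hx hy
  exact hne ((hx.symm.trans (by rw [hl]; exact hy)))

/-- descendants at depth n -/
def Dn (n : ℕ) (x : T) : Set T := {y | par^[n] y = x}

lemma Dn_finite (hfin : ∀ x : T, {y : T | par y = x}.Finite) :
    ∀ (n : ℕ) (x : T), (Dn par n x).Finite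
  | 0, x => (Set.finite_singleton x).subset (fun y hy => by simpa [Dn] using hy)
  | (n+1), x => by
      have : Dn par (n+1) x = ⋃ z ∈ {z : T | par z = x}, Dn par n z := by
        ext y
        simp only [Dn, Set.mem_setOf_eq, Set.mem_iUnion, Function.iterate_succ_apply']
        constructor
        · intro h; exact ⟨par^[n] y, h, rfl⟩
        · rintro ⟨z, hz, rfl⟩; exact hz
      rw [this]
      exact (hfin x).biUnion (fun z _ => Dn_finite hfin n z)

lemma lev_iter (hlev : ∀ x : T, lev (par x) = lev x + 1) (y : T) :
    ∀ n : ℕ, lev (par^[n] y) = lev y + n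
  | 0 => by simp
  | (n+1) => by rw [Function.iterate_succ_apply', hlev, lev_iter hlev y n]; push_cast; ring

lemma lev_of_mem_Dn (hlev : ∀ x : T, lev (par x) = lev x + 1) {n : ℕ} {x y : T}
    (h : y ∈ Dn par n x) : lev y = lev x - n := by
  have := lev_iter par lev hlev y n
  rw [h] at this; omega

lemma sector_decomp (hlev : ∀ x : T, lev (par x) = lev x + 1) (x : T) (n : ℕ) :
    sector par lev x = ⋃ y ∈ Dn par n x, sector par lev y := by
  ext ω
  simp only [Set.mem_iUnion]
  constructor
  · intro hω
    refine ⟨ω.1 (lev x - n), ?_, ?_⟩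
    · show par^[n] (ω.1 (lev x - n)) = x
      rw [pb_iter]; rw [show lev x - n + n = lev x by ring]; exact hω
    · show ω.1 (lev (ω.1 (lev x - n))) = ω.1 (lev x - n)
      rw [ω.2.1]
  · rintro ⟨y, hy, hω⟩
    have hl : lev y = lev x - n := lev_of_mem_Dn par lev hlev hy
    show ω.1 (lev x) = x
    have : par^[n] (ω.1 (lev y)) = ω.1 (lev y + n) := pb_iter par lev ω _ n
    rw [hω] at this
    rw [show lev x = lev y + n by omega, ← this, hy]

lemma iter_eq_of_mem_sectors {z y : T} {ω : PBoundary par lev} {d : ℕ}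
    (hz : ω ∈ sector par lev z) (hy : ω ∈ sector par lev y) (hd : lev z + d = lev y) :
    par^[d] z = y := by
  have : par^[d] (ω.1 (lev z)) = ω.1 (lev z + d) := pb_iter par lev ω _ d
  rw [hz, hd, hy] at this; exact this

end Aux

section Aux2
variable {T : Type*} (par : T → T) (lev : T → ℤ)
  (ν : Measure (PBoundary par lev))

lemma mnu_pos (hν : ∀ x : T, 0 < ν (sector par lev x) ∧ ν (sector par lev x) < ⊤) (x : T) :
    0 < mnu par lev ν x :=
  ENNReal.toReal_pos (hν x).1.ne' (hν x).2.ne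

lemma harmonic_step (hfin : ∀ x : T, {y : T | par y = x}.Finite)
    (hν : ∀ x : T, 0 < ν (sector par lev x) ∧ ν (sector par lev x) < ⊤)
    {f : T → ℝ} (hf : Harmonic par lev ν f) (x : T) :
    f x * mnu par lev ν x = ∑ y ∈ (hfin x).toFinset, f y * mnu par lev ν y := by
  have h0 := hf x
  rw [← Set.Finite.coe_toFinset (hfin x), finsum_mem_coe_finset] at h0
  have hmx : mnu par lev ν x ≠ 0 := (mnu_pos par lev ν hν x).ne'
  rw [h0, Finset.sum_mul]
  refine Finset.sum_congr rfl (fun y _ => ?_)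
  field_simp

lemma Dn_succ (n : ℕ) (x : T) :
    Dn par (n+1) x = ⋃ y ∈ Dn par n x, {z : T | par z = y} := by
  ext z
  simp only [Dn, Set.mem_setOf_eq, Set.mem_iUnion, Function.iterate_succ_apply]
  constructor
  · intro h; exact ⟨par z, h, rfl⟩
  · rintro ⟨y, hy, hz⟩; rw [hz]; exact hy

lemma harmonic_sum (hfin : ∀ x : T, {y : T | par y = x}.Finite)
    (hν : ∀ x : T, 0 < ν (sector par lev x) ∧ ν (sector par lev x) < ⊤)
    {f : T → ℝ} (hf : Harmonic par lev ν f) (n : ℕ) (x : T) :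
    ∑ y ∈ (Dn_finite par hfin n x).toFinset, f y * mnu par lev ν y
      = f x * mnu par lev ν x := by
  classical
  induction n with
  | zero =>
      have : (Dn_finite par hfin 0 x).toFinset = {x} := by
        ext y; simp [Dn]
      rw [this, Finset.sum_singleton]
  | succ n ih =>
      have hset : (Dn_finite par hfin (n+1) x).toFinset
          = (Dn_finite par hfin n x).toFinset.biUnion (fun y => (hfin y).toFinset) := by
        ext z
        simp only [Set.Finite.mem_toFinset, Finset.mem_biUnion]
        rw [Dn_succ par n x]
        simp only [Set.mem_iUnion, Set.mem_setOf_eq]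
        constructor
        · rintro ⟨y, hy, hz⟩; exact ⟨y, hy, hz⟩
        · rintro ⟨y, hy, hz⟩; exact ⟨y, hy, hz⟩
      rw [hset, Finset.sum_biUnion, ← ih]
      · exact Finset.sum_congr rfl fun y _ =>
          (harmonic_step par lev ν hfin hν hf y).symm
      · intro a ha b hb hab
        refine Finset.disjoint_left.mpr (fun z hza hzb => ?_)
        simp only [Set.Finite.mem_toFinset, Set.mem_setOf_eq] at hza hzb
        exact hab (hza ▸ hzb ▸ rfl)

lemma meas_sector_sum (hlev : ∀ x : T, lev (par x) = lev x + 1)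
    (hfin : ∀ x : T, {y : T | par y = x}.Finite) (n : ℕ) (x : T) :
    ν (sector par lev x) = ∑ y ∈ (Dn_finite par hfin n x).toFinset, ν (sector par lev y) := by
  have hd : (sector par lev x) = ⋃ y ∈ (Dn_finite par hfin n x).toFinset, sector par lev y := by
    rw [sector_decomp par lev hlev x n]
    exact Set.iUnion_congr fun y => Set.iUnion_congr_Prop (by simp) (fun _ => rfl)
  rw [hd, measure_biUnion_finset ?_ (fun y _ => sector_measurableSet par lev y)]
  intro a ha b hb hab
  simp only [Finset.mem_coe, Set.Finite.mem_toFinset] at ha hb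
  exact sector_disjoint par lev (by rw [lev_of_mem_Dn par lev hlev ha,
    lev_of_mem_Dn par lev hlev hb]) hab

end Aux2

section Aux3
variable {T : Type*} (par : T → T) (lev : T → ℤ)
  (ν : Measure (PBoundary par lev))

lemma countable_T [Nonempty T] (hfin : ∀ x : T, {y : T | par y = x}.Finite)
    (hconn : ∀ x y : T, ∃ n m : ℕ, par^[n] x = par^[m] y) : Countable T := by
  set x₀ := Classical.arbitrary T
  have hU : (Set.univ : Set T).Countable := by
    have hsub : (Set.univ : Set T) ⊆ ⋃ (m : ℕ), ⋃ (n : ℕ), Dn par n (par^[m] x₀) := by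
      intro y _
      obtain ⟨n, m, h⟩ := hconn y x₀
      exact Set.mem_iUnion.2 ⟨m, Set.mem_iUnion.2 ⟨n, h⟩⟩
    exact Set.Countable.mono hsub
      (Set.countable_iUnion fun m => Set.countable_iUnion fun n =>
        (Dn_finite par hfin n (par^[m] x₀)).countable)
  exact Set.countable_univ_iff.mp hU

lemma level_cover (k : ℤ) :
    (⋃ x : {x : T // lev x = k}, sector par lev x.1) = Set.univ := by
  ext ω
  simp only [Set.mem_iUnion, Set.mem_univ, iff_true]
  refine ⟨⟨ω.1 k, ω.2.1 k⟩, ?_⟩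
  show ω.1 (lev (ω.1 k)) = ω.1 k
  rw [ω.2.1 k]

lemma level_pairwise (k : ℤ) :
    Pairwise (Function.onFun Disjoint (fun x : {x : T // lev x = k} => sector par lev x.1)) :=
  fun a b hab => sector_disjoint par lev (a.2.trans b.2.symm) (fun h => hab (Subtype.ext h))

lemma lintegral_level (hc : Countable T) (k : ℤ) (h : PBoundary par lev → ℝ≥0∞) :
    ∫⁻ ω, h ω ∂ν = ∑' x : {x : T // lev x = k}, ∫⁻ ω in sector par lev x.1, h ω ∂ν := by
  haveI := hc
  rw [← setLIntegral_univ, ← level_cover par lev k]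
  exact lintegral_iUnion (fun x : {x : T // lev x = k} => sector_measurableSet par lev x.1) (level_pairwise par lev k) _

lemma lintegral_level_fun (hc : Countable T) (k : ℤ) (h : T → ℝ≥0∞) :
    ∫⁻ ω, h (ω.1 k) ∂ν = ∑' x : {x : T // lev x = k}, h x.1 * ν (sector par lev x.1) := by
  rw [lintegral_level par lev ν hc k]
  refine tsum_congr fun x => ?_
  obtain ⟨x, rfl⟩ := x
  have : ∫⁻ ω in sector par lev x, h (ω.1 (lev x)) ∂ν
      = ∫⁻ _ in sector par lev x, h x ∂ν := by
    refine setLIntegral_congr_fun (sector_measurableSet par lev x)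
      (fun ω hω => ?_)
    rw [show ω.1 (lev x) = x from hω]
  rw [this, setLIntegral_const]

lemma measurable_eval (hc : Countable T) (k : ℤ) (h : T → ℝ) :
    Measurable fun ω : PBoundary par lev => h (ω.1 k) := by
  haveI := hc
  have he : @Measurable (PBoundary par lev) T _ ⊤ (fun ω => ω.1 k) := by
    intro s _
    have : (fun ω : PBoundary par lev => ω.1 k) ⁻¹' s
        = ⋃ x : {x : T // lev x = k ∧ x ∈ s}, sector par lev x.1 := by
      ext ω
      simp only [Set.mem_preimage, Set.mem_iUnion]
      constructor
      · intro hs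
        refine ⟨⟨ω.1 k, ω.2.1 k, hs⟩, ?_⟩
        show ω.1 (lev (ω.1 k)) = ω.1 k
        rw [ω.2.1 k]
      · rintro ⟨⟨x, hxk, hxs⟩, hω⟩
        subst hxk
        rw [show ω.1 (lev x) = x from hω]; exact hxs
    rw [this]
    exact MeasurableSet.iUnion fun x => sector_measurableSet par lev x.1
  exact measurable_from_top.comp he

end Aux3

section Aux4
variable {T : Type*} (par : T → T) (lev : T → ℤ)
  (ν : Measure (PBoundary par lev))

lemma lintegral_npow_lt_top {p : ℝ} (hp : 1 < p) {g : PBoundary par lev → ℝ}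
    (hg : MemLp g (ENNReal.ofReal p) ν) :
    ∫⁻ ω, (‖g ω‖₊ : ℝ≥0∞) ^ p ∂ν < ⊤ := by
  have hp0 : (0:ℝ) < p := lt_trans one_pos hp
  have h1 : ENNReal.ofReal p ≠ 0 := (ENNReal.ofReal_pos.mpr hp0).ne'
  have h2 : ENNReal.ofReal p ≠ ⊤ := ENNReal.ofReal_ne_top
  have := hg.eLpNorm_lt_top
  rw [eLpNorm_eq_lintegral_rpow_enorm_toReal h1 h2, ENNReal.toReal_ofReal hp0.le] at this
  exact (ENNReal.rpow_lt_top_iff_of_pos (by positivity)).mp this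

lemma poisson_sector_bound
    (hν : ∀ x : T, 0 < ν (sector par lev x) ∧ ν (sector par lev x) < ⊤)
    {p : ℝ} (hp : 1 < p) {g : PBoundary par lev → ℝ}
    (hg : MemLp g (ENNReal.ofReal p) ν) (x : T) :
    ENNReal.ofReal (|poisson par lev ν g x| ^ p) * ν (sector par lev x)
      ≤ ∫⁻ ω in sector par lev x, (‖g ω‖₊ : ℝ≥0∞) ^ p ∂ν := by
  classical
  have hp0 : (0:ℝ) < p := lt_trans one_pos hp
  set q : ℝ := Real.conjExponent p with hqdef
  have hpq : p.HolderConjugate q := Real.HolderConjugate.conjExponent hp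
  set s := sector par lev x with hs
  set V := ν s with hV
  have hV0 : V ≠ 0 := (hν x).1.ne'
  have hVtop : V ≠ ⊤ := (hν x).2.ne
  set A := ∫⁻ ω in s, (‖g ω‖₊ : ℝ≥0∞) ^ p ∂ν with hA
  have hAtop : A ≠ ⊤ :=
    ((setLIntegral_le_lintegral s _).trans_lt
      (lintegral_npow_lt_top par lev ν hp hg)).ne
  -- Hölder
  have hB : ∫⁻ ω in s, (‖g ω‖₊ : ℝ≥0∞) ∂ν ≤ A ^ (1/p) * V ^ (1/q) := by
    have h := ENNReal.lintegral_mul_le_Lp_mul_Lq (ν.restrict s) hpq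
      (hg.restrict s).aestronglyMeasurable.enorm aemeasurable_const
      (f := fun ω => (‖g ω‖₊ : ℝ≥0∞)) (g := fun _ => (1:ℝ≥0∞))
    simpa [ENNReal.one_rpow, lintegral_one, Measure.restrict_apply_univ,
      hpq.symm.pos.ne'] using h
  have hABfin : A ^ (1/p) * V ^ (1/q) ≠ ⊤ :=
    (ENNReal.mul_lt_top
      (ENNReal.rpow_lt_top_of_nonneg (by positivity) hAtop)
      (ENNReal.rpow_lt_top_of_nonneg (by have := hpq.symm.pos; positivity) hVtop)).ne
  have hgint : Integrable g (ν.restrict s) := by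
    haveI : IsFiniteMeasure (ν.restrict s) :=
      ⟨by rw [Measure.restrict_apply_univ]; exact (hν x).2⟩
    exact ((hg.restrict s).mono_exponent
      (ENNReal.one_le_ofReal.mpr hp.le)).integrable le_rfl
  -- real estimate
  set v := V.toReal with hv
  have hv0 : 0 < v := ENNReal.toReal_pos hV0 hVtop
  set a := A.toReal with ha
  have ha0 : 0 ≤ a := ENNReal.toReal_nonneg
  have habs : |poisson par lev ν g x| ≤ (a ^ (1/p) * v ^ (1/q)) / v := by
    have h1 : |poisson par lev ν g x| = v⁻¹ * |∫ ω in s, g ω ∂ν| := by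
      rw [poisson, abs_mul, abs_of_nonneg (by positivity : (0:ℝ) ≤ (mnu par lev ν x)⁻¹)]
      rfl
    have h2 : |∫ ω in s, g ω ∂ν| ≤ a ^ (1/p) * v ^ (1/q) := by
      have h3 : ENNReal.ofReal |∫ ω in s, g ω ∂ν| ≤ A ^ (1/p) * V ^ (1/q) := by
        refine le_trans ?_ hB
        rw [← Real.norm_eq_abs]
        calc ENNReal.ofReal ‖∫ ω in s, g ω ∂ν‖
            ≤ ENNReal.ofReal (∫ ω in s, ‖g ω‖ ∂ν) :=
              ENNReal.ofReal_le_ofReal (norm_integral_le_integral_norm _)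
          _ = ∫⁻ ω in s, (‖g ω‖₊ : ℝ≥0∞) ∂ν :=
              ofReal_integral_norm_eq_lintegral_enorm hgint
      have := ENNReal.toReal_mono hABfin h3
      rw [ENNReal.toReal_ofReal (abs_nonneg _)] at this
      refine this.trans (le_of_eq ?_)
      rw [ENNReal.toReal_mul, ← ENNReal.toReal_rpow, ← ENNReal.toReal_rpow]
    rw [h1, div_eq_inv_mul]
    exact mul_le_mul_of_nonneg_left h2 (by positivity)
  have hkey : |poisson par lev ν g x| ^ p ≤ a * v⁻¹ := by
    have h4 : ((a ^ (1/p) * v ^ (1/q)) / v) ^ p = a * v⁻¹ := by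
      have hexp : 1/q * p - p = -1 := by
        have hq : p / q = p - 1 := hpq.div_conj_eq_sub_one
        have h5 : 1/q * p = p / q := by ring
        rw [h5, hq]; ring
      rw [Real.div_rpow (by positivity) hv0.le,
        Real.mul_rpow (by positivity) (by positivity),
        ← Real.rpow_mul ha0, one_div_mul_cancel hp0.ne', Real.rpow_one,
        ← Real.rpow_mul hv0.le, mul_div_assoc, ← Real.rpow_sub hv0, hexp,
        Real.rpow_neg_one]
    calc |poisson par lev ν g x| ^ p ≤ ((a ^ (1/p) * v ^ (1/q)) / v) ^ p :=
          Real.rpow_le_rpow (abs_nonneg _) habs hp0.le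
      _ = a * v⁻¹ := h4
  calc ENNReal.ofReal (|poisson par lev ν g x| ^ p) * V
      ≤ ENNReal.ofReal (a * v⁻¹) * V :=
        mul_le_mul_left (ENNReal.ofReal_le_ofReal hkey) V
    _ = A * (V⁻¹ * V) := by
        rw [ENNReal.ofReal_mul ha0, ENNReal.ofReal_toReal hAtop,
          ENNReal.ofReal_inv_of_pos hv0, ENNReal.ofReal_toReal hVtop, mul_assoc]
    _ = A := by rw [ENNReal.inv_mul_cancel hV0 hVtop, mul_one]

end Aux4

section Mart
variable {T : Type*} (par : T → T) (lev : T → ℤ)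
  (ν : Measure (PBoundary par lev))

lemma sector_subset (hlev : ∀ x : T, lev (par x) = lev x + 1) {y x : T} {n : ℕ}
    (h : par^[n] y = x) : sector par lev y ⊆ sector par lev x := by
  intro ω hω
  have h1 : par^[n] (ω.1 (lev y)) = ω.1 (lev y + n) := pb_iter par lev ω _ n
  rw [hω, h] at h1
  have h2 : lev x = lev y + n := by
    have := lev_iter par lev hlev y n
    rw [h] at this; omega
  show ω.1 (lev x) = x
  rw [h2, ← h1]

/-- the approximating martingale: simple-function version of `ω ↦ f (ω (lev c - n))`. -/
noncomputable def Gm (hfin : ∀ x : T, {y : T | par y = x}.Finite) (f : T → ℝ) (c : T) (n : ℕ)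
    (ω : PBoundary par lev) : ℝ :=
  ∑ y ∈ (Dn_finite par hfin n c).toFinset,
    Set.indicator (sector par lev y) (fun _ => f y) ω

variable (hlev : ∀ x : T, lev (par x) = lev x + 1)
  (hfin : ∀ x : T, {y : T | par y = x}.Finite)
  (f : T → ℝ)

include hlev in
lemma Gm_eval {c : T} {n : ℕ} {ω : PBoundary par lev} (hω : ω ∈ sector par lev c) :
    Gm par lev hfin f c n ω = f (ω.1 (lev c - n)) := by
  set y0 : T := ω.1 (lev c - n) with hy0
  have hy0lev : lev y0 = lev c - n := ω.2.1 _
  have hy0D : y0 ∈ Dn par n c := by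
    show par^[n] y0 = c
    rw [hy0, pb_iter par lev ω _ n, show lev c - n + n = lev c by ring]
    exact hω
  have hωy0 : ω ∈ sector par lev y0 := by
    show ω.1 (lev y0) = y0
    rw [hy0lev]
  rw [Gm, Finset.sum_eq_single_of_mem y0 ((Set.Finite.mem_toFinset _).2 hy0D)]
  · rw [Set.indicator_of_mem hωy0]
  · intro b hb hbne
    refine Set.indicator_of_notMem (fun hωb => hbne ?_) _
    have hbD : b ∈ Dn par n c := (Set.Finite.mem_toFinset _).1 hb
    have hlb : lev b = lev c - n := lev_of_mem_Dn par lev hlev hbD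
    have : ω.1 (lev b) = b := hωb
    rw [hlb] at this
    rw [← this]

lemma Gm_measurable (c : T) (n : ℕ) : Measurable (Gm par lev hfin f c n) := by
  apply Finset.measurable_sum
  exact fun y _ => measurable_const.indicator (sector_measurableSet par lev y)

/-- The filtration generated by the sectors of the `n`-th generation descendants of `c`. -/
noncomputable def filt (c : T) :
    Filtration ℕ (inferInstance : MeasurableSpace (PBoundary par lev)) where
  seq n := MeasurableSpace.generateFrom ((fun y => sector par lev y) '' Dn par n c)
  mono' := by
    apply monotone_nat_of_le_succ
    intro n
    apply MeasurableSpace.generateFrom_le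
    rintro s ⟨y, hy, rfl⟩
    beta_reduce
    have hdec : sector par lev y = ⋃ z ∈ (hfin y).toFinset, sector par lev z := by
      have h1 := sector_decomp par lev hlev y 1
      rw [h1]
      refine Set.iUnion_congr fun z => Set.iUnion_congr_Prop ?_ (fun _ => rfl)
      simp [Dn]
    rw [hdec]
    refine Set.Finite.measurableSet_biUnion (Set.finite_mem_finset _) (fun z hz => ?_)
    refine MeasurableSpace.measurableSet_generateFrom ⟨z, ?_, rfl⟩
    show par^[n+1] z = c
    rw [Function.iterate_succ_apply]
    have hzy : par z = y := by simpa using (hfin y).mem_toFinset.1 hz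
    rw [hzy]; exact hy
  le' := fun n => by
    apply MeasurableSpace.generateFrom_le
    rintro s ⟨y, _, rfl⟩
    exact sector_measurableSet par lev y

lemma Gm_adapted (c : T) :
    StronglyAdapted (filt par lev hlev hfin c) (Gm par lev hfin f c) := by
  intro n
  refine Finset.stronglyMeasurable_fun_sum _ (fun y hy => ?_)
  refine StronglyMeasurable.indicator stronglyMeasurable_const ?_
  exact MeasurableSpace.measurableSet_generateFrom
    ⟨y, (Set.Finite.mem_toFinset _).1 hy, rfl⟩

lemma Gm_integrable (hν : ∀ x : T, 0 < ν (sector par lev x) ∧ ν (sector par lev x) < ⊤)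
    (c c' : T) (n : ℕ) :
    Integrable (Gm par lev hfin f c n) (ν.restrict (sector par lev c')) := by
  haveI : IsFiniteMeasure (ν.restrict (sector par lev c')) :=
    ⟨by rw [Measure.restrict_apply_univ]; exact (hν c').2⟩
  refine integrable_finset_sum _ (fun y _ => ?_)
  exact (integrable_const (f y)).indicator (sector_measurableSet par lev y)

include hlev in
lemma Gm_setIntegral (hν : ∀ x : T, 0 < ν (sector par lev x) ∧ ν (sector par lev x) < ⊤)
    (hf : Harmonic par lev ν f) (d : ℕ) (y : T) :
    ∫ ω in sector par lev y, Gm par lev hfin f y d ω ∂ν = f y * mnu par lev ν y := by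
  haveI : IsFiniteMeasure (ν.restrict (sector par lev y)) :=
    ⟨by rw [Measure.restrict_apply_univ]; exact (hν y).2⟩
  simp only [Gm]
  rw [integral_finset_sum _ (fun z _ =>
    (integrable_const (f z)).indicator (sector_measurableSet par lev z))]
  have hterm : ∀ z ∈ (Dn_finite par hfin d y).toFinset,
      ∫ ω in sector par lev y, Set.indicator (sector par lev z) (fun _ => f z) ω ∂ν
        = f z * mnu par lev ν z := by
    intro z hz
    have hzD : z ∈ Dn par d y := (Set.Finite.mem_toFinset _).1 hz
    rw [integral_indicator_const (f z) (sector_measurableSet par lev z),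
      measureReal_restrict_apply (sector_measurableSet par lev z),
      Set.inter_eq_self_of_subset_left (sector_subset par lev hlev hzD)]
    rw [smul_eq_mul, mul_comm]
    rfl
  rw [Finset.sum_congr rfl hterm]
  exact harmonic_sum par lev ν hfin hν hf d y

include hlev in
lemma Gm_setIntegral_of_mem
    (hν : ∀ x : T, 0 < ν (sector par lev x) ∧ ν (sector par lev x) < ⊤)
    (hf : Harmonic par lev ν f) {c : T} {i : ℕ} {y : T} (hy : y ∈ Dn par i c) (d : ℕ) :
    ∫ ω in sector par lev y, Gm par lev hfin f c (i + d) ω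
        ∂(ν.restrict (sector par lev c))
      = f y * mnu par lev ν y := by
  rw [Measure.restrict_restrict (sector_measurableSet par lev y),
    Set.inter_eq_self_of_subset_left (sector_subset par lev hlev hy)]
  have heq : Set.EqOn (Gm par lev hfin f c (i + d)) (Gm par lev hfin f y d)
      (sector par lev y) := by
    intro ω hω
    have hωc : ω ∈ sector par lev c := sector_subset par lev hlev hy hω
    rw [Gm_eval par lev hlev hfin f hωc, Gm_eval par lev hlev hfin f hω]
    have hly : lev y = lev c - i := lev_of_mem_Dn par lev hlev hy
    have harg : lev c - ((i + d : ℕ) : ℤ) = lev y - (d : ℤ) := by push_cast; omega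
    rw [harg]
  rw [setIntegral_congr_fun (sector_measurableSet par lev y) heq]
  exact Gm_setIntegral par lev ν hlev hfin f hν hf d y

include hlev in
lemma Gm_setIntegral_eq
    (hν : ∀ x : T, 0 < ν (sector par lev x) ∧ ν (sector par lev x) < ⊤)
    (hf : Harmonic par lev ν f) (c : T) {i j : ℕ} (hij : i ≤ j) {s : Set (PBoundary par lev)}
    (hs : MeasurableSet[filt par lev hlev hfin c i] s) :
    ∫ ω in s, Gm par lev hfin f c i ω ∂(ν.restrict (sector par lev c))
      = ∫ ω in s, Gm par lev hfin f c j ω ∂(ν.restrict (sector par lev c)) := by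
  set μ := ν.restrict (sector par lev c) with hμ
  haveI : IsFiniteMeasure μ :=
    ⟨by rw [Measure.restrict_apply_univ]; exact (hν c).2⟩
  obtain ⟨d, rfl⟩ := Nat.exists_eq_add_of_le hij
  have htot : ∀ n : ℕ, ∫ ω, Gm par lev hfin f c n ω ∂μ = f c * mnu par lev ν c := by
    intro n
    have h0 : c ∈ Dn par 0 c := rfl
    have h1 := Gm_setIntegral_of_mem par lev ν hlev hfin f hν hf h0 n
    rw [Measure.restrict_restrict (sector_measurableSet par lev c), Set.inter_self] at h1
    simpa using h1
  refine MeasurableSpace.induction_on_inter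
    (m := filt par lev hlev hfin c i)
    (C := fun s _ => ∫ ω in s, Gm par lev hfin f c i ω ∂μ
      = ∫ ω in s, Gm par lev hfin f c (i + d) ω ∂μ)
    (s := (fun y => sector par lev y) '' Dn par i c) rfl ?_ ?_ ?_ ?_ ?_ _ hs
  · -- pi system
    rintro s ⟨y, hy, rfl⟩ t ⟨z, hz, rfl⟩ hne
    obtain ⟨ω, hωy, hωz⟩ := hne
    have : y = z := by
      have h1 : ω.1 (lev y) = y := hωy
      have h2 : ω.1 (lev z) = z := hωz
      have h3 : lev y = lev z := by
        rw [lev_of_mem_Dn par lev hlev hy, lev_of_mem_Dn par lev hlev hz]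
      rw [← h1, ← h2, h3]
    subst this
    exact ⟨y, hy, by simp⟩
  · simp
  · -- basic
    rintro t ⟨y, hy, rfl⟩
    beta_reduce
    rw [Gm_setIntegral_of_mem par lev ν hlev hfin f hν hf hy d]
    have := Gm_setIntegral_of_mem par lev ν hlev hfin f hν hf hy 0
    simpa using this
  · -- compl
    intro t htm hC
    have htm0 : MeasurableSet t := (filt par lev hlev hfin c).le i t htm
    have h1 := integral_add_compl htm0 (Gm_integrable par lev ν hfin f hν c c i)
    have h2 := integral_add_compl htm0 (Gm_integrable par lev ν hfin f hν c c (i + d))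
    rw [htot i] at h1
    rw [htot (i + d)] at h2
    linarith
  · -- disjoint union
    intro u hdisj hmeas hC
    have hm0 : ∀ n, MeasurableSet (u n) := fun n => (filt par lev hlev hfin c).le i _ (hmeas n)
    rw [integral_iUnion hm0 hdisj
        (Gm_integrable par lev ν hfin f hν c c i).integrableOn,
      integral_iUnion hm0 hdisj
        (Gm_integrable par lev ν hfin f hν c c (i + d)).integrableOn]
    exact tsum_congr hC

end Mart

section Mart2
variable {T : Type*} (par : T → T) (lev : T → ℤ)
  (ν : Measure (PBoundary par lev))
  (hlev : ∀ x : T, lev (par x) = lev x + 1)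
  (hfin : ∀ x : T, {y : T | par y = x}.Finite)
  (f : T → ℝ)

include hlev in
lemma Gm_submartingale
    (hν : ∀ x : T, 0 < ν (sector par lev x) ∧ ν (sector par lev x) < ⊤)
    (hf : Harmonic par lev ν f) (c : T) :
    Submartingale (Gm par lev hfin f c) (filt par lev hlev hfin c)
      (ν.restrict (sector par lev c)) := by
  haveI : IsFiniteMeasure (ν.restrict (sector par lev c)) :=
    ⟨by rw [Measure.restrict_apply_univ]; exact (hν c).2⟩
  refine submartingale_of_setIntegral_le
    (Gm_adapted par lev hlev hfin f c)
    (fun n => Gm_integrable par lev ν hfin f hν c c n)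
    (fun i j hij s hs => le_of_eq ?_)
  exact Gm_setIntegral_eq par lev ν hlev hfin f hν hf c hij hs

lemma nnnorm_rpow_eq {r : ℝ} {p : ℝ} (hp0 : 0 ≤ p) :
    ((‖r‖₊ : ℝ≥0∞)) ^ p = ENNReal.ofReal (|r| ^ p) := by
  rw [← enorm_eq_nnnorm, ← ofReal_norm, Real.norm_eq_abs,
    ENNReal.ofReal_rpow_of_nonneg (abs_nonneg _) hp0]

include hlev in
lemma Gm_lintegral_pow_le (hc : Countable T) {p : ℝ} (hp : 1 < p) (M : ℝ≥0∞)
    (hM : ∀ k : ℤ, (∑' x : {x : T // lev x = k},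
        ENNReal.ofReal (|f x.1| ^ p) * ν (sector par lev x.1)) ≤ M)
    (c : T) (n : ℕ) :
    ∫⁻ ω, (‖Gm par lev hfin f c n ω‖₊ : ℝ≥0∞) ^ p ∂(ν.restrict (sector par lev c)) ≤ M := by
  have hp0 : (0:ℝ) < p := lt_trans one_pos hp
  have h1 : ∫⁻ ω, (‖Gm par lev hfin f c n ω‖₊ : ℝ≥0∞) ^ p ∂(ν.restrict (sector par lev c))
      = ∫⁻ ω in sector par lev c, ENNReal.ofReal (|f (ω.1 (lev c - n))| ^ p) ∂ν := by
    refine setLIntegral_congr_fun (sector_measurableSet par lev c)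
      (fun ω hω => ?_)
    rw [Gm_eval par lev hlev hfin f hω, nnnorm_rpow_eq hp0.le]
  rw [h1]
  calc ∫⁻ ω in sector par lev c, ENNReal.ofReal (|f (ω.1 (lev c - n))| ^ p) ∂ν
      ≤ ∫⁻ ω, ENNReal.ofReal (|f (ω.1 (lev c - n))| ^ p) ∂ν :=
        setLIntegral_le_lintegral _ _
    _ = ∑' x : {x : T // lev x = (lev c - n)},
          ENNReal.ofReal (|f x.1| ^ p) * ν (sector par lev x.1) :=
        lintegral_level_fun par lev ν hc (lev c - n) (fun t => ENNReal.ofReal (|f t| ^ p))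
    _ ≤ M := hM _

include hlev in
lemma Gm_eLpNorm_le (hc : Countable T)
    (hν : ∀ x : T, 0 < ν (sector par lev x) ∧ ν (sector par lev x) < ⊤)
    {p : ℝ} (hp : 1 < p) (M : ℝ≥0∞)
    (hM : ∀ k : ℤ, (∑' x : {x : T // lev x = k},
        ENNReal.ofReal (|f x.1| ^ p) * ν (sector par lev x.1)) ≤ M)
    (c : T) (n : ℕ) :
    eLpNorm (Gm par lev hfin f c n) 1 (ν.restrict (sector par lev c))
      ≤ M ^ (1/p) * (ν (sector par lev c)) ^ (1 - 1/p) := by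
  have hp0 : (0:ℝ) < p := lt_trans one_pos hp
  set μ := ν.restrict (sector par lev c) with hμ
  have hple : (1 : ℝ≥0∞) ≤ ENNReal.ofReal p := ENNReal.one_le_ofReal.mpr hp.le
  have h2 := eLpNorm_le_eLpNorm_mul_rpow_measure_univ hple
    (Gm_measurable par lev hfin f c n).aestronglyMeasurable (μ := μ)
  have h3 : eLpNorm (Gm par lev hfin f c n) (ENNReal.ofReal p) μ ≤ M ^ (1/p) := by
    rw [eLpNorm_eq_lintegral_rpow_enorm_toReal (ENNReal.ofReal_pos.mpr hp0).ne'
      ENNReal.ofReal_ne_top, ENNReal.toReal_ofReal hp0.le]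
    refine ENNReal.rpow_le_rpow ?_ (by positivity)
    exact Gm_lintegral_pow_le par lev ν hlev hfin f hc hp M hM c n
  have h4 : μ Set.univ = ν (sector par lev c) := by
    rw [hμ, Measure.restrict_apply_univ]
  calc eLpNorm (Gm par lev hfin f c n) 1 μ
      ≤ eLpNorm (Gm par lev hfin f c n) (ENNReal.ofReal p) μ
          * (μ Set.univ) ^ (1 / (1:ℝ≥0∞).toReal - 1 / (ENNReal.ofReal p).toReal) := h2
    _ ≤ M ^ (1/p) * (ν (sector par lev c)) ^ (1 - 1/p) := by
        rw [h4]
        refine mul_le_mul' h3 (le_of_eq ?_)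
        congr 1
        rw [ENNReal.toReal_one, ENNReal.toReal_ofReal hp0.le]
        norm_num

include hlev hfin in
lemma Gm_ae_tendsto (hc : Countable T)
    (hν : ∀ x : T, 0 < ν (sector par lev x) ∧ ν (sector par lev x) < ⊤)
    (hf : Harmonic par lev ν f) {p : ℝ} (hp : 1 < p) (M : ℝ≥0∞) (hMtop : M ≠ ⊤)
    (hM : ∀ k : ℤ, (∑' x : {x : T // lev x = k},
        ENNReal.ofReal (|f x.1| ^ p) * ν (sector par lev x.1)) ≤ M)
    (c : T) :
    ∀ᵐ ω ∂(ν.restrict (sector par lev c)),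
      ∃ L, Filter.Tendsto (fun n : ℕ => f (ω.1 (lev c - n))) Filter.atTop (nhds L) := by
  haveI : IsFiniteMeasure (ν.restrict (sector par lev c)) :=
    ⟨by rw [Measure.restrict_apply_univ]; exact (hν c).2⟩
  set R' : ℝ≥0∞ := M ^ (1/p) * (ν (sector par lev c)) ^ (1 - 1/p) with hR'
  have hp0 : (0:ℝ) < p := lt_trans one_pos hp
  have hR'top : R' ≠ ⊤ := by
    refine (ENNReal.mul_lt_top ?_ ?_).ne
    · exact ENNReal.rpow_lt_top_of_nonneg (by positivity) hMtop
    · exact ENNReal.rpow_lt_top_of_nonneg (by rw [sub_nonneg]; rw [div_le_one hp0]; linarith) (hν c).2.ne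
  have hbdd : ∀ n, eLpNorm (Gm par lev hfin f c n) 1 (ν.restrict (sector par lev c))
      ≤ (R'.toNNReal : ℝ≥0) := by
    intro n
    rw [ENNReal.coe_toNNReal hR'top]
    exact Gm_eLpNorm_le par lev ν hlev hfin f hc hν hp M hM c n
  have hconv := (Gm_submartingale par lev ν hlev hfin f hν hf c).exists_ae_tendsto_of_bdd hbdd
  filter_upwards [hconv, ae_restrict_mem (sector_measurableSet par lev c)] with ω hω hmem
  obtain ⟨L, hL⟩ := hω
  refine ⟨L, ?_⟩
  have hfun : (fun n : ℕ => f (ω.1 (lev c - n))) = fun n => Gm par lev hfin f c n ω :=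
    funext fun n => (Gm_eval par lev hlev hfin f hmem).symm
  rw [hfun]
  exact hL

end Mart2

section Mart3
open Filter
variable {T : Type*} (par : T → T) (lev : T → ℤ)
  (ν : Measure (PBoundary par lev))
  (hlev : ∀ x : T, lev (par x) = lev x + 1)
  (hfin : ∀ x : T, {y : T | par y = x}.Finite)
  (f : T → ℝ)

lemma trunc_le {α : Type*} [MeasurableSpace α] (μ : Measure α) {h : α → ℝ}
    (hm : Measurable h) {C : ℝ≥0} (hC : C ≠ 0) {p : ℝ} (hp : 1 < p) :
    eLpNorm (Set.indicator {ω | C ≤ ‖h ω‖₊} h) 1 μ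
      ≤ (C : ℝ≥0∞) ^ (1 - p) * ∫⁻ ω, (‖h ω‖₊ : ℝ≥0∞) ^ p ∂μ := by
  set s := {ω | C ≤ ‖h ω‖₊} with hsdef
  have hsm : MeasurableSet s := measurableSet_le measurable_const hm.nnnorm
  simp only [eLpNorm_one_eq_lintegral_enorm, enorm_eq_nnnorm]
  have h1 : ∀ ω, ((‖Set.indicator s h ω‖₊ : ℝ≥0∞))
      = Set.indicator s (fun ω => ((‖h ω‖₊ : ℝ≥0∞))) ω := by
    intro ω
    rw [nnnorm_indicator_eq_indicator_nnnorm, ENNReal.coe_indicator]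
  simp_rw [h1]
  rw [lintegral_indicator hsm]
  have hC0 : (C : ℝ≥0∞) ≠ 0 := by exact_mod_cast hC
  calc ∫⁻ ω in s, (‖h ω‖₊ : ℝ≥0∞) ∂μ
      ≤ ∫⁻ ω in s, (C : ℝ≥0∞) ^ (1 - p) * (‖h ω‖₊ : ℝ≥0∞) ^ p ∂μ := by
        refine setLIntegral_mono' hsm (fun ω hω => ?_)
        have hCa : (C : ℝ≥0∞) ≤ (‖h ω‖₊ : ℝ≥0∞) := by exact_mod_cast hω
        have ha0 : ((‖h ω‖₊ : ℝ≥0∞)) ≠ 0 := by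
          intro h0; rw [h0] at hCa; exact hC0 (le_antisymm (by simpa using hCa) zero_le)
        have hatop : ((‖h ω‖₊ : ℝ≥0∞)) ≠ ⊤ := ENNReal.coe_ne_top
        have hsplit : ((‖h ω‖₊ : ℝ≥0∞))
            = ((‖h ω‖₊ : ℝ≥0∞)) ^ (1 - p) * ((‖h ω‖₊ : ℝ≥0∞)) ^ p := by
          rw [← ENNReal.rpow_add _ _ ha0 hatop]
          norm_num
        refine le_trans hsplit.le (mul_le_mul_left ?_ _)
        rw [show (1 - p : ℝ) = -(p-1) by ring, ENNReal.rpow_neg, ENNReal.rpow_neg]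
        exact ENNReal.inv_le_inv.mpr (ENNReal.rpow_le_rpow hCa (by linarith))
    _ = (C : ℝ≥0∞) ^ (1 - p) * ∫⁻ ω in s, (‖h ω‖₊ : ℝ≥0∞) ^ p ∂μ := by
        rw [lintegral_const_mul' _ _ (by
          rw [show (1 - p : ℝ) = -(p-1) by ring, ENNReal.rpow_neg]
          exact ENNReal.inv_ne_top.mpr (ENNReal.rpow_pos
            (ENNReal.coe_pos.mpr (pos_iff_ne_zero.mpr hC)) ENNReal.coe_ne_top).ne')]
    _ ≤ (C : ℝ≥0∞) ^ (1 - p) * ∫⁻ ω, (‖h ω‖₊ : ℝ≥0∞) ^ p ∂μ :=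
        mul_le_mul_right (setLIntegral_le_lintegral _ _) _

include hlev hfin in
lemma Gm_identify (hc : Countable T)
    (hν : ∀ x : T, 0 < ν (sector par lev x) ∧ ν (sector par lev x) < ⊤)
    (hf : Harmonic par lev ν f) {p : ℝ} (hp : 1 < p) (M : ℝ≥0∞) (hMtop : M ≠ ⊤)
    (hM : ∀ k : ℤ, (∑' x : {x : T // lev x = k},
        ENNReal.ofReal (|f x.1| ^ p) * ν (sector par lev x.1)) ≤ M)
    (c : T) {g : PBoundary par lev → ℝ} (hg : MemLp g (ENNReal.ofReal p) ν)
    (hconv : ∀ᵐ ω ∂(ν.restrict (sector par lev c)),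
      Tendsto (fun n : ℕ => f (ω.1 (lev c - n))) atTop (nhds (g ω))) :
    ∫ ω in sector par lev c, g ω ∂ν = f c * mnu par lev ν c := by
  have hp0 : (0:ℝ) < p := lt_trans one_pos hp
  set μ := ν.restrict (sector par lev c) with hμ
  haveI : IsFiniteMeasure μ :=
    ⟨by rw [hμ, Measure.restrict_apply_univ]; exact (hν c).2⟩
  have hGae : ∀ᵐ ω ∂μ, Tendsto (fun n : ℕ => Gm par lev hfin f c n ω) atTop (nhds (g ω)) := by
    filter_upwards [hconv, ae_restrict_mem (sector_measurableSet par lev c)] with ω h1 h2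
    exact Filter.Tendsto.congr
      (fun n => (Gm_eval par lev hlev hfin f h2).symm) h1
  have hui : UnifIntegrable (Gm par lev hfin f c) 1 μ := by
    refine unifIntegrable_of le_rfl ENNReal.one_ne_top
      (fun n => (Gm_measurable par lev hfin f c n).aestronglyMeasurable) ?_
    intro ε hε
    have hεtop : ENNReal.ofReal ε ≠ 0 := (ENNReal.ofReal_pos.mpr hε).ne'
    set D : ℝ≥0∞ := (M / ENNReal.ofReal ε) ^ (1/(p-1)) with hD
    have hDtop : D ≠ ⊤ := by
      refine (ENNReal.rpow_lt_top_of_nonneg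
        (by have h9 : (0:ℝ) < p - 1 := by linarith
            positivity) ?_).ne
      exact (ENNReal.div_lt_top hMtop hεtop).ne
    set C : ℝ≥0 := D.toNNReal + 1 with hCdef
    have hC0 : C ≠ 0 := by simp [hCdef]
    refine ⟨C, fun n => ?_⟩
    have hCD : D ≤ (C : ℝ≥0∞) := by
      rw [hCdef]
      push_cast
      rw [ENNReal.coe_toNNReal hDtop]
      exact le_self_add
    have hCpow : M ≤ (C : ℝ≥0∞) ^ (p-1) * ENNReal.ofReal ε := by
      have h5 : D ^ (p-1) ≤ (C : ℝ≥0∞) ^ (p-1) :=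
        ENNReal.rpow_le_rpow hCD (by linarith)
      have h6 : D ^ (p-1) = M / ENNReal.ofReal ε := by
        rw [hD, ← ENNReal.rpow_mul, one_div_mul_cancel (by linarith : p - 1 ≠ 0),
          ENNReal.rpow_one]
      rw [h6] at h5
      calc M = M / ENNReal.ofReal ε * ENNReal.ofReal ε :=
            (ENNReal.div_mul_cancel hεtop ENNReal.ofReal_ne_top).symm
        _ ≤ (C : ℝ≥0∞) ^ (p-1) * ENNReal.ofReal ε := mul_le_mul_left h5 _
    calc eLpNorm (Set.indicator {ω | C ≤ ‖Gm par lev hfin f c n ω‖₊}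
            (Gm par lev hfin f c n)) 1 μ
        ≤ (C : ℝ≥0∞) ^ (1 - p) * ∫⁻ ω, (‖Gm par lev hfin f c n ω‖₊ : ℝ≥0∞) ^ p ∂μ :=
          trunc_le μ (Gm_measurable par lev hfin f c n) hC0 hp
      _ ≤ (C : ℝ≥0∞) ^ (1 - p) * M :=
          mul_le_mul_right (Gm_lintegral_pow_le par lev ν hlev hfin f hc hp M hM c n) _
      _ ≤ (C : ℝ≥0∞) ^ (1 - p) * ((C : ℝ≥0∞) ^ (p-1) * ENNReal.ofReal ε) :=
          mul_le_mul_right hCpow _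
      _ = ENNReal.ofReal ε := by
          rw [← mul_assoc, ← ENNReal.rpow_add _ _ (by exact_mod_cast hC0) ENNReal.coe_ne_top]
          norm_num
  have hg1 : MemLp g 1 μ :=
    (hg.restrict _).mono_exponent (ENNReal.one_le_ofReal.mpr hp.le)
  have hLp := tendsto_Lp_finite_of_tendsto_ae le_rfl ENNReal.one_ne_top
    (fun n => (Gm_measurable par lev hfin f c n).aestronglyMeasurable) hg1 hui hGae
  have hint : Tendsto (fun n => ∫ ω, Gm par lev hfin f c n ω ∂μ) atTop
      (nhds (∫ ω, g ω ∂μ)) := by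
    refine tendsto_integral_of_L1 g (hg1.integrable le_rfl).aestronglyMeasurable
      (Filter.Eventually.of_forall fun n => Gm_integrable par lev ν hfin f hν c c n) ?_
    simpa only [eLpNorm_one_eq_lintegral_enorm, Pi.sub_apply] using hLp
  have hconst : ∀ n : ℕ, ∫ ω, Gm par lev hfin f c n ω ∂μ = f c * mnu par lev ν c := by
    intro n
    have h0 : c ∈ Dn par 0 c := rfl
    have h1 := Gm_setIntegral_of_mem par lev ν hlev hfin f hν hf h0 n
    rw [Measure.restrict_restrict (sector_measurableSet par lev c), Set.inter_self] at h1
    simpa using h1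
  have : Tendsto (fun _ : ℕ => f c * mnu par lev ν c) atTop (nhds (∫ ω, g ω ∂μ)) := by
    rw [show (fun _ : ℕ => f c * mnu par lev ν c)
      = fun n => ∫ ω, Gm par lev hfin f c n ω ∂μ from funext fun n => (hconst n).symm]
    exact hint
  exact (tendsto_nhds_unique tendsto_const_nhds this).symm

end Mart3

section Final
open Filter
variable {T : Type*} (par : T → T) (lev : T → ℤ)

lemma tendsto_shift {a : ℤ → ℝ} {L : ℝ} {k k' : ℤ}
    (h : Tendsto (fun n : ℕ => a (k - n)) atTop (nhds L)) :
    Tendsto (fun n : ℕ => a (k' - n)) atTop (nhds L) := by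
  rcases le_total k' k with hle | hle
  · set d : ℕ := (k - k').toNat with hd
    have hd' : (d:ℤ) = k - k' := Int.toNat_of_nonneg (by omega)
    have h2 := h.comp (tendsto_add_atTop_nat d)
    refine h2.congr fun n => ?_
    show a (k - ((n + d : ℕ) : ℤ)) = a (k' - n)
    congr 1; push_cast; omega
  · set d : ℕ := (k' - k).toNat with hd
    have hd' : (d:ℤ) = k' - k := Int.toNat_of_nonneg (by omega)
    have h2 : Tendsto (fun n : ℕ => a (k' - ((n + d : ℕ) : ℤ))) atTop (nhds L) := by
      refine h.congr fun n => ?_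
      congr 1; push_cast; omega
    exact (tendsto_add_atTop_iff_nat (f := fun n : ℕ => a (k' - n)) d).mp h2

lemma exists_sector_mem (hconn : ∀ x y : T, ∃ n m : ℕ, par^[n] x = par^[m] y)
    (x₀ : T) (ω : PBoundary par lev) : ∃ m : ℕ, ω ∈ sector par lev (par^[m] x₀) := by
  obtain ⟨n, m, h⟩ := hconn (ω.1 0) x₀
  have h1 : par^[n] (ω.1 0) = ω.1 (0 + n) := pb_iter par lev ω 0 n
  refine ⟨m, ?_⟩
  show ω.1 (lev (par^[m] x₀)) = par^[m] x₀
  have h2 : lev (par^[m] x₀) = (0 + n : ℤ) := by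
    rw [← h, h1, ω.2.1]
  rw [h2, ← h1, h]

end Final

/-- For `p ∈ (1,∞)`, a harmonic function `f` belongs to `H^p`
(i.e. `sup_k Σ_{ℓ(x)=k} |f(x)|^p m_ν(x) < ∞`) if and only if it is the Poisson
integral of some `g ∈ L^p(∂T, ν)`. -/
theorem stmt6 {T : Type*} [Nonempty T] (par : T → T) (lev : T → ℤ)
    (hlev : ∀ x : T, lev (par x) = lev x + 1)
    (hfin : ∀ x : T, {y : T | par y = x}.Finite)
    (hsucc : ∀ x : T, ∃ y : T, par y = x)
    (hconn : ∀ x y : T, ∃ n m : ℕ, par^[n] x = par^[m] y)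
    (ν : Measure (PBoundary par lev))
    (hν : ∀ x : T, 0 < ν (sector par lev x) ∧ ν (sector par lev x) < ⊤)
    (p : ℝ) (hp : 1 < p)
    (f : T → ℝ) (hf : Harmonic par lev ν f) :
    (⨆ k : ℤ, ∑' x : {x : T // lev x = k},
        ENNReal.ofReal (|f x.1| ^ p) * ν (sector par lev x.1)) < ⊤
      ↔ ∃ g : PBoundary par lev → ℝ,
          MemLp g (ENNReal.ofReal p) ν ∧ ∀ x : T, f x = poisson par lev ν g x := by
  classical
  open Filter in
  have hc : Countable T := countable_T par hfin hconn
  have hp0 : (0:ℝ) < p := lt_trans one_pos hp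
  constructor
  · -- hard direction
    intro hsup
    set M : ℝ≥0∞ := ⨆ k : ℤ, ∑' x : {x : T // lev x = k},
        ENNReal.ofReal (|f x.1| ^ p) * ν (sector par lev x.1) with hMdef
    have hMtop : M ≠ ⊤ := hsup.ne
    have hM : ∀ k : ℤ, (∑' x : {x : T // lev x = k},
        ENNReal.ofReal (|f x.1| ^ p) * ν (sector par lev x.1)) ≤ M :=
      fun k => le_iSup (fun k : ℤ => ∑' x : {x : T // lev x = k},
        ENNReal.ofReal (|f x.1| ^ p) * ν (sector par lev x.1)) k
    set P : PBoundary par lev → Prop :=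
      fun ω => ∃ L, Tendsto (fun n : ℕ => f (ω.1 (0 - n))) atTop (nhds L) with hPdef
    set g : PBoundary par lev → ℝ := fun ω => if h : P ω then h.choose else 0 with hgdef
    have hgood : ∀ c : T, ∀ᵐ ω ∂(ν.restrict (sector par lev c)),
        Tendsto (fun n : ℕ => f (ω.1 (lev c - n))) atTop (nhds (g ω)) := by
      intro c
      filter_upwards [Gm_ae_tendsto par lev ν hlev hfin f hc hν hf hp M hMtop hM c] with ω hω
      obtain ⟨L, hL⟩ := hω
      have hP : P ω := ⟨L, tendsto_shift (a := fun j => f (ω.1 j)) (k := lev c) (k' := 0) hL⟩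
      have hg0 : Tendsto (fun n : ℕ => f (ω.1 (0 - n))) atTop (nhds (g ω)) := by
        have : g ω = hP.choose := dif_pos hP
        rw [this]
        exact hP.choose_spec
      exact tendsto_shift (a := fun j => f (ω.1 j)) (k := 0) (k' := lev c) hg0
    have hgood0 : ∀ c : T, ∀ᵐ ω ∂(ν.restrict (sector par lev c)),
        Tendsto (fun n : ℕ => f (ω.1 (0 - n))) atTop (nhds (g ω)) :=
      fun c => (hgood c).mono fun ω hω =>
        tendsto_shift (a := fun j => f (ω.1 j)) (k := lev c) (k' := 0) hω
    set x₀ : T := Classical.arbitrary T with hx₀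
    have hglob : ∀ᵐ ω ∂ν, Tendsto (fun n : ℕ => f (ω.1 (0 - n))) atTop (nhds (g ω)) := by
      rw [ae_iff]
      set s : Set (PBoundary par lev) :=
        {ω | ¬ Tendsto (fun n : ℕ => f (ω.1 (0 - n))) atTop (nhds (g ω))} with hsdef
      have hz : ∀ m : ℕ, ν (s ∩ sector par lev (par^[m] x₀)) = 0 := by
        intro m
        have h1 := hgood0 (par^[m] x₀)
        rw [ae_iff] at h1
        rw [Measure.restrict_apply' (sector_measurableSet par lev (par^[m] x₀))] at h1
        exact h1
      have hsub : s ⊆ ⋃ m : ℕ, s ∩ sector par lev (par^[m] x₀) := by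
        intro ω hω
        obtain ⟨m, hm⟩ := exists_sector_mem par lev hconn x₀ ω
        exact Set.mem_iUnion.2 ⟨m, hω, hm⟩
      refine le_antisymm ?_ zero_le
      refine le_trans (measure_mono hsub) ?_
      refine le_trans (measure_iUnion_le _) ?_
      simp [hz]
    have hFm : ∀ n : ℕ, Measurable (fun ω : PBoundary par lev => f (ω.1 (0 - n))) :=
      fun n => measurable_eval par lev hc (0 - n) f
    have hgm : AEMeasurable g ν :=
      aemeasurable_of_tendsto_metrizable_ae' (fun n => (hFm n).aemeasurable) hglob
    have hfatou : ∫⁻ ω, ((‖g ω‖₊ : ℝ≥0∞)) ^ p ∂ν ≤ M := by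
      have hle : ∫⁻ ω, ((‖g ω‖₊ : ℝ≥0∞)) ^ p ∂ν
          ≤ ∫⁻ ω, liminf (fun n : ℕ => ((‖f (ω.1 (0 - n))‖₊ : ℝ≥0∞)) ^ p) atTop ∂ν := by
        refine lintegral_mono_ae (hglob.mono fun ω hω => ?_)
        have h1 : Tendsto (fun n : ℕ => ((‖f (ω.1 (0 - n))‖₊ : ℝ≥0∞)) ^ p) atTop
            (nhds (((‖g ω‖₊ : ℝ≥0∞)) ^ p)) := by
          apply (ENNReal.continuous_rpow_const.tendsto _).comp
          exact (ENNReal.continuous_coe.tendsto _).comp ((continuous_nnnorm.tendsto _).comp hω)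
        rw [h1.liminf_eq]
      refine hle.trans ?_
      refine le_trans (lintegral_liminf_le fun n =>
        ENNReal.continuous_rpow_const.measurable.comp (hFm n).enorm) ?_
      have hn : ∀ n : ℕ, ∫⁻ ω, ((‖f (ω.1 (0 - n))‖₊ : ℝ≥0∞)) ^ p ∂ν ≤ M := by
        intro n
        have heq : ∀ ω : PBoundary par lev,
            ((‖f (ω.1 (0 - n))‖₊ : ℝ≥0∞)) ^ p = ENNReal.ofReal (|f (ω.1 (0 - n))| ^ p) :=
          fun ω => nnnorm_rpow_eq hp0.le
        rw [lintegral_congr heq,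
          lintegral_level_fun par lev ν hc (0 - n) (fun t => ENNReal.ofReal (|f t| ^ p))]
        exact hM _
      have h8 : Filter.limsup
          (fun n : ℕ => ∫⁻ ω, ((‖f (ω.1 (0 - n))‖₊ : ℝ≥0∞)) ^ p ∂ν) atTop ≤ M :=
        limsup_le_of_le (h := Eventually.of_forall hn)
      exact le_trans liminf_le_limsup h8
    have hmem : MemLp g (ENNReal.ofReal p) ν := by
      refine ⟨hgm.aestronglyMeasurable, ?_⟩
      rw [eLpNorm_eq_lintegral_rpow_enorm_toReal (ENNReal.ofReal_pos.mpr hp0).ne'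
        ENNReal.ofReal_ne_top, ENNReal.toReal_ofReal hp0.le]
      refine lt_of_le_of_lt (ENNReal.rpow_le_rpow hfatou (by positivity)) ?_
      exact ENNReal.rpow_lt_top_of_nonneg (by positivity) hMtop
    refine ⟨g, hmem, fun x => ?_⟩
    have hid := Gm_identify par lev ν hlev hfin f hc hν hf hp M hMtop hM x hmem (hgood x)
    simp only [poisson]
    rw [hid]
    have hmx : mnu par lev ν x ≠ 0 := (mnu_pos par lev ν hν x).ne'
    field_simp
  · -- easy direction
    rintro ⟨g, hg, hfg⟩
    refine lt_of_le_of_lt (iSup_le fun k => ?_) (lintegral_npow_lt_top par lev ν hp hg)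
    calc ∑' x : {x : T // lev x = k},
          ENNReal.ofReal (|f x.1| ^ p) * ν (sector par lev x.1)
        ≤ ∑' x : {x : T // lev x = k},
            ∫⁻ ω in sector par lev x.1, ((‖g ω‖₊ : ℝ≥0∞)) ^ p ∂ν := by
          refine ENNReal.tsum_le_tsum fun x => ?_
          rw [hfg x.1]
          exact poisson_sector_bound par lev ν hν hp hg x.1
      _ = ∫⁻ ω, ((‖g ω‖₊ : ℝ≥0∞)) ^ p ∂ν :=
          (lintegral_level par lev ν hc k _).symm
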